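/- arXiv:2008.03887 — 5 statements merged into one kernel-verified Lean document; each statement's English description precedes it below -/
import Mathlib

section
/- For every constant c > 0 and every d ∈ ℕ, there exists a connected graph G of diameter at least d such that γ_pr(G × G) < c·γ_pr(G)². -/
set_option linter.unusedVariables false
set_option linter.unnecessarySeqFocus false

open SimpleGraph

variable {V : Type*} {W : Type*}

/-- The direct (tensor) product of two simple graphs. -/
def SimpleGraph.tensor (G : SimpleGraph V) (H : SimpleGraph W) : SimpleGraph (V × W) where
  Adj p q := G.Adj p.1 q.1 ∧ H.Adj p.2 q.2
  symm := ⟨fun p q h => ⟨h.1.symm, h.2.symm⟩⟩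
  loopless := ⟨fun p h => G.irrefl h.1⟩

/-- A dominating set: every vertex is in `D` or adjacent to a member of `D`. -/
def SimpleGraph.Dominating (G : SimpleGraph V) (D : Set V) : Prop :=
  ∀ v, ∃ u ∈ D, u = v ∨ G.Adj u v

/-- The domination number. -/
noncomputable def SimpleGraph.domNum (G : SimpleGraph V) : ℕ :=
  sInf {n | ∃ D : Set V, G.Dominating D ∧ D.ncard = n}

/-- A total dominating set. -/
def SimpleGraph.TotalDominating (G : SimpleGraph V) (D : Set V) : Prop :=
  ∀ v, ∃ u ∈ D, G.Adj u v

/-- The total domination number. -/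
noncomputable def SimpleGraph.totalDomNum (G : SimpleGraph V) : ℕ :=
  sInf {n | ∃ D : Set V, G.TotalDominating D ∧ D.ncard = n}

/-- A paired dominating set: dominating and the induced subgraph has a perfect matching. -/
def SimpleGraph.PairedDominating (G : SimpleGraph V) (D : Set V) : Prop :=
  G.Dominating D ∧ ∃ M : (G.induce D).Subgraph, M.IsPerfectMatching

/-- The paired domination number. -/
noncomputable def SimpleGraph.pairedDomNum (G : SimpleGraph V) : ℕ :=
  sInf {n | ∃ D : Set V, G.PairedDominating D ∧ D.ncard = n}

/-- A 3-packing: vertices pairwise at distance greater than 3. -/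
def SimpleGraph.Packing3 (G : SimpleGraph V) (P : Set V) : Prop :=
  P.Pairwise fun u v => ¬G.Reachable u v ∨ 3 < G.dist u v

/-- The 3-packing number. -/
noncomputable def SimpleGraph.packNum3 (G : SimpleGraph V) : ℕ :=
  sSup {n | ∃ P : Set V, G.Packing3 P ∧ P.ncard = n}

/-- A minimal dominating set. -/
def SimpleGraph.MinimalDominating (G : SimpleGraph V) (D : Set V) : Prop :=
  G.Dominating D ∧ ∀ D' ⊆ D, G.Dominating D' → D' = D

/-- The upper domination number. -/
noncomputable def SimpleGraph.upperDomNum (G : SimpleGraph V) : ℕ :=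
  sSup {n | ∃ D : Set V, G.MinimalDominating D ∧ D.ncard = n}

/-- `G` has no isolated vertices. -/
def SimpleGraph.NoIsolated (G : SimpleGraph V) : Prop := ∀ v, ∃ u, G.Adj u v

/-- Direct product of complete graphs `K_{n 0} × ... × K_{n (t-1)}`:
tuples adjacent iff they differ in every coordinate. -/
def prodCompleteGraphs {t : ℕ} (n : Fin t → ℕ) : SimpleGraph (∀ i, Fin (n i)) where
  Adj a b := a ≠ b ∧ ∀ i, a i ≠ b i
  symm := ⟨fun a b h => ⟨h.1.symm, fun i => (h.2 i).symm⟩⟩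
  loopless := ⟨fun a h => h.1 rfl⟩

/-- `G` together with a new pendant vertex (`none`) attached to `v`. -/
def addPendant (G : SimpleGraph V) (v : V) : SimpleGraph (Option V) where
  Adj x y :=
    match x, y with
    | some a, some b => G.Adj a b
    | some a, none => a = v
    | none, some b => b = v
    | none, none => False
  symm := by
    constructor
    rintro (_ | a) (_ | b) h <;> simp_all [SimpleGraph.adj_comm]
  loopless := by
    constructor
    rintro (_ | a) h <;> simp_all

/-- `G` with a path on `ℓ` vertices appended to vertex `u` via a bridge. -/
def appendPath (G : SimpleGraph V) (u : V) (ℓ : ℕ) : SimpleGraph (V ⊕ Fin ℓ) where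
  Adj x y :=
    match x, y with
    | Sum.inl a, Sum.inl b => G.Adj a b
    | Sum.inl a, Sum.inr j => a = u ∧ (j : ℕ) = 0
    | Sum.inr i, Sum.inl b => b = u ∧ (i : ℕ) = 0
    | Sum.inr i, Sum.inr j => (i : ℕ) + 1 = j ∨ (j : ℕ) + 1 = i
  symm := by
    constructor
    rintro (a | i) (b | j) h <;> simp_all [SimpleGraph.adj_comm] <;> tauto
  loopless := by
    constructor
    rintro (a | i) h <;> simp_all

/-- `G` with a pendant path on two vertices `(v,1)–(v,2)` attached to each vertex `(v,0)`. -/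
def attachPaths2 (G : SimpleGraph V) : SimpleGraph (V × Fin 3) where
  Adj p q :=
    (p.2 = 0 ∧ q.2 = 0 ∧ G.Adj p.1 q.1) ∨
    (p.1 = q.1 ∧ ((p.2 = 0 ∧ q.2 = 1) ∨ (p.2 = 1 ∧ q.2 = 0) ∨
      (p.2 = 1 ∧ q.2 = 2) ∨ (p.2 = 2 ∧ q.2 = 1)))
  symm := by
    constructor
    rintro ⟨a, i⟩ ⟨b, j⟩ h <;> simp_all [SimpleGraph.adj_comm] <;> tauto
  loopless := by
    constructor
    rintro ⟨a, i⟩ h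
    rcases h with ⟨-, -, h⟩ | ⟨-, h⟩
    · exact G.irrefl h
    · rcases h with ⟨h1, h2⟩ | ⟨h1, h2⟩ | ⟨h1, h2⟩ | ⟨h1, h2⟩ <;> simp_all



section Aux

lemma exists_pm {W : Type*} (H : SimpleGraph W) (μ : W → W)
    (hμ : Function.Involutive μ) (hadj : ∀ v, H.Adj v (μ v)) :
    ∃ M : H.Subgraph, M.IsPerfectMatching := by
  refine ⟨{ verts := Set.univ
            Adj := fun a b => b = μ a ∨ a = μ b
            adj_sub := ?_
            edge_vert := fun _ => trivial
            symm := ?_ }, ?_, fun v => trivial⟩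
  · rintro a b (rfl | rfl)
    · exact hadj a
    · exact (hadj b).symm
  · constructor
    rintro a b (rfl | rfl)
    · exact Or.inr rfl
    · exact Or.inl rfl
  · rintro v -
    refine ⟨μ v, Or.inl rfl, ?_⟩
    rintro w (rfl | rfl)
    · rfl
    · exact (hμ w).symm

lemma pd_of_index {V : Type*} (G : SimpleGraph V) {I : Type*}
    (f : I → V) (hf : Function.Injective f) (σ : I → I) (hσ : Function.Involutive σ)
    (hadj : ∀ i, G.Adj (f i) (f (σ i))) (hdom : G.Dominating (Set.range f)) :
    G.PairedDominating (Set.range f) := by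
  refine ⟨hdom, ?_⟩
  have idx : ∀ v : ↥(Set.range f), {i : I // f i = ↑v} := fun v => ⟨v.2.choose, v.2.choose_spec⟩
  set μ : ↥(Set.range f) → ↥(Set.range f) :=
    fun v => ⟨f (σ (idx v).1), Set.mem_range_self _⟩ with hμdef
  have hidx : ∀ v, f ((idx (μ v)).1) = f (σ ((idx v).1)) := fun v => (idx (μ v)).2
  have hμinv : Function.Involutive μ := by
    intro v
    apply Subtype.ext
    show f (σ (idx (μ v)).1) = ↑v
    rw [hf (hidx v), hσ]
    exact (idx v).2
  apply exists_pm _ μ hμinv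
  intro v
  show G.Adj ↑v ↑(μ v)
  have h := (idx v).2
  conv_lhs => rw [← h]
  exact hadj _

/-- flip involution on `Fin (2*m)` -/
def flip2 {m : ℕ} (j : Fin (2*m)) : Fin (2*m) :=
  if h : (j : ℕ) % 2 = 0 then ⟨(j:ℕ)+1, by have := j.2; omega⟩
  else ⟨(j:ℕ)-1, by have := j.2; omega⟩

lemma flip2_prop {m : ℕ} (j : Fin (2*m)) :
    ((j:ℕ)+1 = flip2 j ∨ ((flip2 j : Fin (2*m)):ℕ)+1 = j) := by
  have := j.2
  unfold flip2
  split
  · left; simp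
  · right; simp; omega

lemma flip2_ne {m : ℕ} (j : Fin (2*m)) : flip2 j ≠ j := by
  have := j.2
  unfold flip2
  split <;> (intro h; apply_fun Fin.val at h; simp at h; try omega)

lemma flip2_invol {m : ℕ} : Function.Involutive (@flip2 m) := by
  intro j
  have := j.2
  apply Fin.ext
  unfold flip2
  split
  · rw [dif_neg (by simp; omega)]
    simp
  · rw [dif_pos (by simp; omega)]
    simp; omega

end Aux

section Constr

variable (d t : ℕ)

/-- base vertex type -/
abbrev SS := (∀ _ : Fin t, Fin (2*(t+1)+2)) ⊕ Fin (2*(d+1))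

/-- attachment vertex -/
def u0 : ∀ _ : Fin t, Fin (2*(t+1)+2) := fun _ => 0

/-- the base graph -/
def Gb : SimpleGraph (SS d t) :=
  appendPath (prodCompleteGraphs (fun _ : Fin t => 2*(t+1)+2)) (u0 t) (2*(d+1))

lemma adj_inl_inl {x y : ∀ _ : Fin t, Fin (2*(t+1)+2)} :
    (Gb d t).Adj (Sum.inl x) (Sum.inl y) ↔ (x ≠ y ∧ ∀ i, x i ≠ y i) := Iff.rfl

lemma adj_inl_inr {x : ∀ _ : Fin t, Fin (2*(t+1)+2)} {j : Fin (2*(d+1))} :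
    (Gb d t).Adj (Sum.inl x) (Sum.inr j) ↔ (x = u0 t ∧ (j:ℕ) = 0) := Iff.rfl

lemma adj_inr_inl {x : ∀ _ : Fin t, Fin (2*(t+1)+2)} {j : Fin (2*(d+1))} :
    (Gb d t).Adj (Sum.inr j) (Sum.inl x) ↔ (x = u0 t ∧ (j:ℕ) = 0) := Iff.rfl

lemma adj_inr_inr {i j : Fin (2*(d+1))} :
    (Gb d t).Adj (Sum.inr i) (Sum.inr j) ↔ ((i:ℕ)+1 = j ∨ (j:ℕ)+1 = i) := Iff.rfl

/-- constant vectors -/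
def cst (k : Fin (2*(t+1))) : ∀ _ : Fin t, Fin (2*(t+1)+2) :=
  fun _ => Fin.castLE (by omega) k

end Constr

section Constr2
variable (d t : ℕ)

lemma cst_injective (ht : 1 ≤ t) : Function.Injective (cst t) := by
  intro k k' h
  have h0 := congrFun h ⟨0, ht⟩
  exact Fin.castLE_injective _ h0

lemma cst_adj (ht : 1 ≤ t) {k k' : Fin (2*(t+1))} (hkk : k ≠ k') :
    (Gb d t).Adj (Sum.inl (cst t k)) (Sum.inl (cst t k')) := by
  rw [adj_inl_inl]
  have hv : ∀ i, cst t k i ≠ cst t k' i := fun i h => hkk (Fin.castLE_injective _ h)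
  exact ⟨fun h => hv ⟨0, ht⟩ (congrFun h _), hv⟩

lemma adj_of_avoid (ht : 1 ≤ t) {x y : ∀ _ : Fin t, Fin (2*(t+1)+2)}
    (h : ∀ i, x i ≠ y i) : (Gb d t).Adj (Sum.inl x) (Sum.inl y) := by
  rw [adj_inl_inl]
  exact ⟨fun he => h ⟨0, ht⟩ (congrFun he _), h⟩

lemma exists_avoid (ht : 1 ≤ t) (x y : ∀ _ : Fin t, Fin (2*(t+1)+2)) :
    ∃ k : Fin (2*(t+1)), (∀ i, cst t k i ≠ x i) ∧ (∀ i, cst t k i ≠ y i) := by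
  classical
  set A : Finset (Fin (2*(t+1)+2)) :=
    Finset.univ.image (fun k : Fin (2*(t+1)) => (Fin.castLE (by omega) k : Fin (2*(t+1)+2)))
  set B : Finset (Fin (2*(t+1)+2)) :=
    (Finset.univ.image x) ∪ (Finset.univ.image y)
  have hA : A.card = 2*(t+1) := by
    rw [Finset.card_image_of_injective _ (Fin.castLE_injective _)]
    simp
  have hB : B.card ≤ 2*t := by
    calc B.card ≤ (Finset.univ.image x).card + (Finset.univ.image y).card :=
          Finset.card_union_le _ _
    _ ≤ t + t := by
        gcongr <;> exact le_trans (Finset.card_image_le) (by simp)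
    _ = 2*t := by omega
  have hsub : ¬ A ⊆ B := fun hs => by
    have := Finset.card_le_card hs
    omega
  obtain ⟨v, hvA, hvB⟩ := Finset.not_subset.mp hsub
  simp only [A, Finset.mem_image, Finset.mem_univ, true_and] at hvA
  obtain ⟨k, rfl⟩ := hvA
  refine ⟨k, fun i h => hvB ?_, fun i h => hvB ?_⟩
  · exact Finset.mem_union_left _ (Finset.mem_image.mpr ⟨i, Finset.mem_univ _, h.symm⟩)
  · exact Finset.mem_union_right _ (Finset.mem_image.mpr ⟨i, Finset.mem_univ _, h.symm⟩)

end Constr2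

section Constr3
variable (d t : ℕ)

/-- index type for the small paired dominating set of the base graph -/
abbrev I0 := Fin (2*(t+1)) ⊕ Fin (2*(d+1))

def f0 : I0 d t → SS d t := Sum.elim (fun k => Sum.inl (cst t k)) (fun j => Sum.inr j)

def σ0 : I0 d t → I0 d t := Sum.map flip2 flip2

lemma f0_injective (ht : 1 ≤ t) : Function.Injective (f0 d t) := by
  rintro (k | j) (k' | j') h <;> simp only [f0, Sum.elim_inl, Sum.elim_inr] at h
  · rw [cst_injective t ht (Sum.inl.inj h)]
  · exact absurd h (by simp)
  · exact absurd h (by simp)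
  · rw [Sum.inr.inj h]

lemma σ0_invol : Function.Involutive (σ0 d t) := by
  intro i
  cases i with
  | inl k => simp [σ0, flip2_invol k]
  | inr j => simp [σ0, flip2_invol j]

lemma f0_adj (ht : 1 ≤ t) : ∀ i, (Gb d t).Adj (f0 d t i) (f0 d t (σ0 d t i)) := by
  rintro (k | j)
  · exact cst_adj d t ht (flip2_ne k).symm
  · rw [f0, σ0]
    simp only [Sum.map_inr, Sum.elim_inr]
    rw [adj_inr_inr]
    exact flip2_prop j

lemma f0_dom (ht : 1 ≤ t) : (Gb d t).Dominating (Set.range (f0 d t)) := by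
  rintro (x | j)
  · obtain ⟨k, hk, -⟩ := exists_avoid t ht x x
    exact ⟨Sum.inl (cst t k), ⟨Sum.inl k, rfl⟩, Or.inr (adj_of_avoid d t ht hk)⟩
  · refine ⟨Sum.inr (flip2 j), ⟨Sum.inr (flip2 j), rfl⟩, Or.inr ?_⟩
    rw [adj_inr_inr]
    rcases flip2_prop j with h | h
    · exact Or.inr h
    · exact Or.inl h

lemma fresh_vector (Tf : Finset (∀ _ : Fin t, Fin (2*(t+1)+2))) (hst : Tf.card < t) :
    ∃ x : ∀ _ : Fin t, Fin (2*(t+1)+2),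
      (∀ w ∈ Tf, ∃ i, x i = w i) ∧ x ∉ Tf ∧ x ≠ u0 t := by
  classical
  obtain ⟨a, ha⟩ : ∃ a, a ∉ insert 0 (Tf.image fun w => w ⟨Tf.card, hst⟩) := by
    by_contra h'
    push_neg at h'
    have h4 := Finset.card_le_card
      (fun a _ => h' a : Finset.univ ⊆ insert 0 (Tf.image fun w => w ⟨Tf.card, hst⟩))
    have h3 := Finset.card_insert_le (0 : Fin (2*(t+1)+2)) (Tf.image fun w => w ⟨Tf.card, hst⟩)
    have h2 : (Tf.image fun w => w ⟨Tf.card, hst⟩).card ≤ Tf.card := Finset.card_image_le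
    rw [Finset.card_univ, Fintype.card_fin] at h4
    have h5 : Tf.card < t := hst
    generalize (Tf.image fun w => w ⟨Tf.card, hst⟩).card = m at h2 h3 h4
    generalize (insert 0 (Tf.image fun w => w ⟨Tf.card, hst⟩)).card = m' at h3 h4
    omega
  refine ⟨fun i => if h : (i:ℕ) < Tf.card
      then (↑(Tf.equivFin.symm ⟨i, h⟩) : ∀ _ : Fin t, Fin (2*(t+1)+2)) i else a, ?_, ?_, ?_⟩
  · intro w hw
    refine ⟨⟨(Tf.equivFin ⟨w, hw⟩ : ℕ), lt_trans (Tf.equivFin ⟨w, hw⟩).2 hst⟩, ?_⟩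
    dsimp only
    rw [dif_pos (Tf.equivFin ⟨w, hw⟩).2]
    have h6 : Tf.equivFin.symm ⟨(Tf.equivFin ⟨w, hw⟩ : ℕ), (Tf.equivFin ⟨w, hw⟩).2⟩
        = ⟨w, hw⟩ := by
      rw [show (⟨(Tf.equivFin ⟨w, hw⟩ : ℕ), (Tf.equivFin ⟨w, hw⟩).2⟩ : Fin Tf.card)
          = Tf.equivFin ⟨w, hw⟩ from rfl, Equiv.symm_apply_apply]
    rw [h6]
  · intro hmem
    apply ha
    refine Finset.mem_insert_of_mem (Finset.mem_image.mpr ⟨_, hmem, ?_⟩)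
    dsimp only
    rw [dif_neg (by simp)]
  · intro h
    apply ha
    have h5 := congrFun h ⟨Tf.card, hst⟩
    dsimp only at h5
    rw [dif_neg (by simp)] at h5
    rw [show a = (0 : Fin (2*(t+1)+2)) from h5]
    exact Finset.mem_insert_self _ _

/-- every dominating set of the base graph has at least `t` elements -/
lemma lower_bound (D : Set (SS d t)) (hdom : (Gb d t).Dominating D) : t ≤ D.ncard := by
  classical
  by_contra hlt
  push_neg at hlt
  have hfin : ({x | Sum.inl x ∈ D} : Set (∀ _ : Fin t, Fin (2*(t+1)+2))).Finite :=
    Set.toFinite _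
  have hmemT : ∀ x, x ∈ hfin.toFinset ↔ Sum.inl x ∈ D := fun x => Set.Finite.mem_toFinset _
  have hcard : hfin.toFinset.card ≤ D.ncard := by
    have h1 : ({x | Sum.inl x ∈ D} : Set _).ncard ≤ D.ncard := by
      rw [← Set.ncard_image_of_injective _ Sum.inl_injective]
      exact Set.ncard_le_ncard (by rintro _ ⟨x, hx, rfl⟩; exact hx) (Set.toFinite D)
    rwa [Set.ncard_eq_toFinset_card _ hfin] at h1
  have hst : hfin.toFinset.card < t := lt_of_le_of_lt hcard hlt
  obtain ⟨x, hx_agree, hx_notin, hx_ne_u⟩ := fresh_vector t hfin.toFinset hst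
  obtain ⟨w, hwD, hcase⟩ := hdom (Sum.inl x)
  cases w with
  | inl y =>
    have hyT : y ∈ hfin.toFinset := (hmemT y).mpr hwD
    rcases hcase with heq | hadj
    · exact hx_notin (by rwa [Sum.inl.inj heq] at hyT)
    · rw [adj_inl_inl] at hadj
      obtain ⟨i, hi⟩ := hx_agree y hyT
      exact hadj.2 i hi.symm
  | inr j =>
    rcases hcase with heq | hadj
    · exact absurd heq (by simp)
    · rw [adj_inr_inl] at hadj
      exact hx_ne_u hadj.1

end Constr3

section Constr4
variable (d t : ℕ)

abbrev NN : ℕ := (2*(t+1)+2)^t + 2*(d+1)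

def ee : Fin (NN d t) ≃ SS d t :=
  finSumFinEquiv.symm.trans
    (Equiv.sumCongr finFunctionFinEquiv.symm (Equiv.refl (Fin (2*(d+1)))))

def G' : SimpleGraph (Fin (NN d t)) := (Gb d t).comap (ee d t)

lemma G'_adj {a b : Fin (NN d t)} :
    (G' d t).Adj a b ↔ (Gb d t).Adj (ee d t a) (ee d t b) := Iff.rfl

lemma Gb_reach (ht : 1 ≤ t) : ∀ v, (Gb d t).Reachable v (Sum.inl (u0 t)) := by
  have key : ∀ m : ℕ, ∀ j : Fin (2*(d+1)), (j:ℕ) ≤ m →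
      (Gb d t).Reachable (Sum.inr j) (Sum.inl (u0 t)) := by
    intro m
    induction m with
    | zero =>
      intro j hj
      exact SimpleGraph.Adj.reachable ((adj_inr_inl d t).mpr ⟨rfl, Nat.le_zero.mp hj⟩)
    | succ m ih =>
      intro j hj
      by_cases h0 : (j:ℕ) = 0
      · exact SimpleGraph.Adj.reachable ((adj_inr_inl d t).mpr ⟨rfl, h0⟩)
      · have hlt : (j:ℕ) - 1 < 2*(d+1) := by have := j.2; omega
        have hadj : (Gb d t).Adj (Sum.inr j) (Sum.inr ⟨(j:ℕ)-1, hlt⟩) := by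
          rw [adj_inr_inr]
          right
          simp
          omega
        exact (SimpleGraph.Adj.reachable hadj).trans (ih ⟨(j:ℕ)-1, hlt⟩ (by simp; omega))
  rintro (x | j)
  · by_cases hx : x = u0 t
    · rw [hx]
    · obtain ⟨k, hk1, hk2⟩ := exists_avoid t ht x (u0 t)
      have h1 : (Gb d t).Adj (Sum.inl x) (Sum.inl (cst t k)) :=
        ((Gb d t).adj_symm (adj_of_avoid d t ht hk1))
      have h2 : (Gb d t).Adj (Sum.inl (cst t k)) (Sum.inl (u0 t)) :=
        adj_of_avoid d t ht hk2
      exact (SimpleGraph.Adj.reachable h1).trans (SimpleGraph.Adj.reachable h2)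
  · exact key (2*(d+1)) j (le_of_lt j.2)

def homBG : Gb d t →g G' d t :=
  ⟨(ee d t).symm, by
    intro x y h
    rw [G'_adj]
    simpa using h⟩

lemma homBG_apply (x : SS d t) : homBG d t x = (ee d t).symm x := rfl

lemma G'_connected (ht : 1 ≤ t) : (G' d t).Connected := by
  rw [SimpleGraph.connected_iff]
  constructor
  · intro a b
    have hom : Gb d t →g G' d t := homBG d t
    have r1 := (Gb_reach d t ht (ee d t a)).map (homBG d t)
    have r2 := (Gb_reach d t ht (ee d t b)).map (homBG d t)
    rw [homBG_apply, (ee d t).symm_apply_apply] at r1 r2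
    exact r1.trans r2.symm
  · exact ⟨(ee d t).symm (Sum.inl (u0 t))⟩

end Constr4

section Constr5
variable (d t : ℕ)

def φv : Fin (NN d t) → ℕ := fun a =>
  Sum.elim (fun (_ : ∀ _ : Fin t, Fin (2*(t+1)+2)) => (0:ℕ))
    (fun (j : Fin (2*(d+1))) => (j:ℕ)+1) (ee d t a)

lemma φv_eq (a : Fin (NN d t)) :
    φv d t a = Sum.elim (fun (_ : ∀ _ : Fin t, Fin (2*(t+1)+2)) => (0:ℕ))
      (fun (j : Fin (2*(d+1))) => (j:ℕ)+1) (ee d t a) := rfl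

lemma φv_lip {a b : Fin (NN d t)} (h : (G' d t).Adj a b) : φv d t a ≤ φv d t b + 1 := by
  have h' : (Gb d t).Adj (ee d t a) (ee d t b) := h
  rcases hA : ee d t a with x | i <;> rcases hB : ee d t b with y | j <;>
    rw [hA, hB] at h' <;> rw [φv_eq, φv_eq, hA, hB] <;>
    simp only [Sum.elim_inl, Sum.elim_inr]
  · omega
  · omega
  · rw [adj_inr_inl] at h'
    omega
  · rw [adj_inr_inr] at h'
    omega

lemma φv_walk {a b : Fin (NN d t)} (p : (G' d t).Walk a b) :
    φv d t a ≤ φv d t b + p.length := by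
  induction p with
  | nil => simp
  | cons h q ih =>
    have := φv_lip d t h
    simp only [SimpleGraph.Walk.length_cons]
    omega

lemma dist_lb (ht : 1 ≤ t) :
    d ≤ (G' d t).dist ((ee d t).symm (Sum.inr ⟨2*d+1, by omega⟩))
      ((ee d t).symm (Sum.inl (u0 t))) := by
  set a := (ee d t).symm (Sum.inr (⟨2*d+1, by omega⟩ : Fin (2*(d+1))))
  set b := (ee d t).symm (Sum.inl (u0 t))
  have hr : (G' d t).Reachable a b := ((G'_connected d t ht).preconnected) a b
  obtain ⟨p, hp⟩ := hr.exists_walk_length_eq_dist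
  have h1 := φv_walk d t p
  have ha : φv d t a = 2*d+2 := by
    rw [φv_eq, show ee d t a = Sum.inr (⟨2*d+1, by omega⟩ : Fin (2*(d+1))) from
      (ee d t).apply_symm_apply _]
    simp
  have hb : φv d t b = 0 := by
    rw [φv_eq, show ee d t b = Sum.inl (u0 t) from (ee d t).apply_symm_apply _]
    simp
  rw [ha, hb, hp] at h1
  omega

lemma dom_comap_down {α β : Type*} (e : α ≃ β) (H : SimpleGraph β) (R : Set β)
    (hdom : H.Dominating R) : (H.comap e).Dominating (e.symm '' R) := by
  intro v
  obtain ⟨w, hw, hc⟩ := hdom (e v)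
  refine ⟨e.symm w, ⟨w, hw, rfl⟩, ?_⟩
  rcases hc with rfl | hadj
  · exact Or.inl (e.symm_apply_apply v)
  · refine Or.inr ?_
    show H.Adj (e (e.symm w)) (e v)
    rwa [e.apply_symm_apply]

lemma dom_comap_up {α β : Type*} (e : α ≃ β) (H : SimpleGraph β) (D : Set α)
    (hdom : (H.comap e).Dominating D) : H.Dominating (e '' D) := by
  intro v
  obtain ⟨w, hw, hc⟩ := hdom (e.symm v)
  refine ⟨e w, ⟨w, hw, rfl⟩, ?_⟩
  rcases hc with rfl | hadj
  · exact Or.inl (e.apply_symm_apply v)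
  · refine Or.inr ?_
    have : H.Adj (e w) (e (e.symm v)) := hadj
    rwa [e.apply_symm_apply] at this

lemma pd_comap_of_index {α β : Type*} (e : α ≃ β) (H : SimpleGraph β) {I : Type*}
    (f : I → β) (hf : Function.Injective f) (σ : I → I) (hσ : Function.Involutive σ)
    (hadj : ∀ i, H.Adj (f i) (f (σ i))) (hdom : H.Dominating (Set.range f)) :
    (H.comap e).PairedDominating (Set.range (⇑e.symm ∘ f)) := by
  apply pd_of_index
  · exact e.symm.injective.comp hf
  · exact hσ
  · intro i
    show H.Adj (e (e.symm (f i))) (e (e.symm (f (σ i))))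
    rw [e.apply_symm_apply, e.apply_symm_apply]
    exact hadj i
  · rw [Set.range_comp]
    exact dom_comap_down e H _ hdom

lemma ncard_range {α β : Type*} [Fintype α] (f : α → β) (hf : Function.Injective f) :
    (Set.range f).ncard = Fintype.card α := by
  rw [← Set.image_univ, Set.ncard_image_of_injective _ hf, Set.ncard_univ,
    Nat.card_eq_fintype_card]

lemma pdn_lower (ht : 1 ≤ t) : t ≤ (G' d t).pairedDomNum := by
  apply le_csInf
  · exact ⟨(Set.range (⇑(ee d t).symm ∘ f0 d t)).ncard,
      Set.range (⇑(ee d t).symm ∘ f0 d t),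
      pd_comap_of_index (ee d t) (Gb d t) (f0 d t) (f0_injective d t ht) (σ0 d t)
        (σ0_invol d t) (f0_adj d t ht) (f0_dom d t ht), rfl⟩
  · rintro n ⟨D, ⟨hDdom, -⟩, rfl⟩
    have h1 : (Gb d t).Dominating ((ee d t) '' D) := dom_comap_up _ _ _ hDdom
    have h2 := lower_bound d t _ h1
    rwa [Set.ncard_image_of_injective _ (ee d t).injective] at h2

end Constr5

section Constr6
variable (d t : ℕ)

abbrev I1 := (Fin (2*(t+1))) ⊕
  ((Fin (2*(t+1)) × Fin (2*(d+1))) ⊕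
   ((Fin (2*(d+1)) × Fin (2*(t+1))) ⊕ (Fin (2*(d+1)) × Fin (2*(d+1)))))

def f1 : I1 d t → SS d t × SS d t :=
  Sum.elim (fun k => (Sum.inl (cst t k), Sum.inl (cst t k)))
    (Sum.elim (fun p => (Sum.inl (cst t p.1), Sum.inr p.2))
      (Sum.elim (fun p => (Sum.inr p.1, Sum.inl (cst t p.2)))
        (fun p => (Sum.inr p.1, Sum.inr p.2))))

def σ1 : I1 d t → I1 d t :=
  Sum.map flip2 (Sum.map (Prod.map flip2 flip2)
    (Sum.map (Prod.map flip2 flip2) (Prod.map flip2 flip2)))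

lemma σ1_invol : Function.Involutive (σ1 d t) := by
  rintro (k | ⟨a, b⟩ | ⟨a, b⟩ | ⟨a, b⟩)
  · simp [σ1, flip2_invol k]
  all_goals simp [σ1, flip2_invol a, flip2_invol b]

lemma f1_injective (ht : 1 ≤ t) : Function.Injective (f1 d t) := by
  have hc := cst_injective t ht
  rintro (k | ⟨a, b⟩ | ⟨a, b⟩ | ⟨a, b⟩) (k' | ⟨a', b'⟩ | ⟨a', b'⟩ | ⟨a', b'⟩) h <;>
    simp only [f1, Sum.elim_inl, Sum.elim_inr, Prod.mk.injEq, Sum.inl.injEq, Sum.inr.injEq,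
      reduceCtorEq, false_and, and_false] at h
  · rw [hc h.1]
  · obtain ⟨h1, h2⟩ := h
    rw [hc h1, h2]
  · obtain ⟨h1, h2⟩ := h
    rw [h1, hc h2]
  · obtain ⟨h1, h2⟩ := h
    rw [h1, h2]

lemma adj_flip_path {j : Fin (2*(d+1))} :
    (Gb d t).Adj (Sum.inr (flip2 j)) (Sum.inr j) := by
  rw [adj_inr_inr]
  rcases flip2_prop j with h | h
  · exact Or.inr h
  · exact Or.inl h

lemma f1_adj (ht : 1 ≤ t) :
    ∀ i, ((Gb d t).tensor (Gb d t)).Adj (f1 d t i) (f1 d t (σ1 d t i)) := by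
  have hpath : ∀ j : Fin (2*(d+1)), (Gb d t).Adj (Sum.inr j) (Sum.inr (flip2 j)) :=
    fun j => (adj_flip_path d t).symm
  rintro (k | ⟨a, b⟩ | ⟨a, b⟩ | ⟨a, b⟩) <;>
    simp only [f1, σ1, Sum.map_inl, Sum.map_inr, Sum.elim_inl, Sum.elim_inr, Prod.map_fst,
      Prod.map_snd, Prod.map_apply] <;>
    exact ⟨by first
      | exact cst_adj d t ht (flip2_ne _).symm
      | exact hpath _,
      by first
      | exact cst_adj d t ht (flip2_ne _).symm
      | exact hpath _⟩

lemma f1_dom (ht : 1 ≤ t) :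
    ((Gb d t).tensor (Gb d t)).Dominating (Set.range (f1 d t)) := by
  rintro ⟨x | i, y | j⟩
  · obtain ⟨k, hk1, hk2⟩ := exists_avoid t ht x y
    refine ⟨f1 d t (Sum.inl k), Set.mem_range_self _, Or.inr ?_⟩
    exact ⟨adj_of_avoid d t ht hk1, adj_of_avoid d t ht hk2⟩
  · obtain ⟨k, hk1, -⟩ := exists_avoid t ht x x
    refine ⟨f1 d t (Sum.inr (Sum.inl (k, flip2 j))), Set.mem_range_self _, Or.inr ?_⟩
    exact ⟨adj_of_avoid d t ht hk1, adj_flip_path d t⟩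
  · obtain ⟨k, hk1, -⟩ := exists_avoid t ht y y
    refine ⟨f1 d t (Sum.inr (Sum.inr (Sum.inl (flip2 i, k)))), Set.mem_range_self _, Or.inr ?_⟩
    exact ⟨adj_flip_path d t, adj_of_avoid d t ht hk1⟩
  · refine ⟨f1 d t (Sum.inr (Sum.inr (Sum.inr (flip2 i, flip2 j)))),
      Set.mem_range_self _, Or.inr ?_⟩
    exact ⟨adj_flip_path d t, adj_flip_path d t⟩

lemma tensor_comap :
    (G' d t).tensor (G' d t) =
      ((Gb d t).tensor (Gb d t)).comap ((ee d t).prodCongr (ee d t)) := rfl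

lemma pdn_upper (ht : 1 ≤ t) :
    ((G' d t).tensor (G' d t)).pairedDomNum ≤ Fintype.card (I1 d t) := by
  have hpd := pd_comap_of_index ((ee d t).prodCongr (ee d t)) ((Gb d t).tensor (Gb d t))
    (f1 d t) (f1_injective d t ht) (σ1 d t) (σ1_invol d t) (f1_adj d t ht) (f1_dom d t ht)
  rw [← tensor_comap] at hpd
  apply Nat.sInf_le
  refine ⟨_, hpd, ?_⟩
  exact ncard_range _ ((((ee d t).prodCongr (ee d t)).symm).injective.comp (f1_injective d t ht))

end Constr6

lemma arith_nat (l t : ℕ) (h1 : 1 ≤ t) (h2 : l*l ≤ t) :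
    2*(t+1) + (2*(t+1)*l + (l*(2*(t+1)) + l*l)) ≤ t*(8*l+5) := by nlinarith

lemma card_I1 (d t : ℕ) : Fintype.card (I1 d t) =
    2*(t+1) + (2*(t+1)*(2*(d+1)) + ((2*(d+1))*(2*(t+1)) + (2*(d+1))*(2*(d+1)))) := by
  simp [Fintype.card_sum, Fintype.card_prod]

theorem stmt12' (c : ℝ) (hc : 0 < c) (d : ℕ) :
    ∃ (n : ℕ) (G : SimpleGraph (Fin n)), G.Connected ∧ (∃ u v : Fin n, d ≤ G.dist u v) ∧
      ((G.tensor G).pairedDomNum : ℝ) < c * (G.pairedDomNum : ℝ) ^ 2 := by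
  set l : ℕ := 2*(d+1) with hl
  set t : ℕ := max (l*l) ⌈(8*l+5 : ℝ)/c⌉₊ + 1 with ht_def
  have ht : 1 ≤ t := by omega
  have hll : l*l ≤ t := by
    have h0 := le_max_left (l*l) ⌈(8*l+5 : ℝ)/c⌉₊
    omega
  have hceil : ((8*l+5 : ℝ)/c) < t := by
    calc ((8*l+5 : ℝ)/c) ≤ ⌈(8*l+5 : ℝ)/c⌉₊ := Nat.le_ceil _
    _ < t := by
      have : ⌈(8*l+5 : ℝ)/c⌉₊ < t := by omega
      exact_mod_cast this
  have hkey : (8*(l:ℝ)+5) < c * t := by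
    rw [div_lt_iff₀ hc] at hceil
    linarith [hceil]
  refine ⟨NN d t, G' d t, G'_connected d t ht, ⟨_, _, dist_lb d t ht⟩, ?_⟩
  have hU : (((G' d t).tensor (G' d t)).pairedDomNum : ℝ) ≤ (t*(8*l+5) : ℕ) := by
    have h1 := pdn_upper d t ht
    rw [card_I1] at h1
    have h2 := arith_nat l t ht hll
    rw [hl] at h2
    exact_mod_cast le_trans h1 h2
  have hL : (t : ℝ) ≤ ((G' d t).pairedDomNum : ℝ) := by exact_mod_cast pdn_lower d t ht
  have ht0 : (0:ℝ) < t := by exact_mod_cast ht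
  calc (((G' d t).tensor (G' d t)).pairedDomNum : ℝ)
      ≤ (t*(8*l+5) : ℕ) := hU
    _ = (t:ℝ) * (8*l+5) := by push_cast; ring
    _ < (t:ℝ) * (c * t) := by
        apply mul_lt_mul_of_pos_left hkey ht0
    _ = c * (t:ℝ)^2 := by ring
    _ ≤ c * ((G' d t).pairedDomNum : ℝ)^2 := by
        apply mul_le_mul_of_nonneg_left _ hc.le
        apply pow_le_pow_left₀ ht0.le hL

theorem stmt12 (c : ℝ) (hc : 0 < c) (d : ℕ) :
    ∃ (n : ℕ) (G : SimpleGraph (Fin n)), G.Connected ∧ (∃ u v : Fin n, d ≤ G.dist u v) ∧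
      ((G.tensor G).pairedDomNum : ℝ) < c * (G.pairedDomNum : ℝ) ^ 2 := stmt12' c hc d
end

section
/- Let G be a vertex-transitive graph, and let G^{·ℓ} be the graph obtained by attaching a path on ℓ vertices to G via a bridge. Then γ_pr(G^{·ℓ}) ≥ γ_pr(G). -/
set_option linter.unusedVariables false
set_option linter.unnecessarySeqFocus false

open SimpleGraph

variable {V : Type*} {W : Type*}

-- auxiliary lemmas for stmt13

/-- A "pairing" on a set: an involution matching each element to an adjacent element. -/
def IsPairing {U : Type*} (H : SimpleGraph U) (D : Set U) (P : U → U) : Prop :=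
  ∀ v ∈ D, P v ∈ D ∧ H.Adj v (P v) ∧ P (P v) = v

lemma pairing_to_matching {U : Type*} (H : SimpleGraph U) (D : Set U) (P : U → U)
    (hP : IsPairing H D P) :
    ∃ M : (H.induce D).Subgraph, M.IsPerfectMatching := by
  refine ⟨⟨Set.univ, fun a b => P a.1 = b.1, ?_, fun {_ _} _ => Set.mem_univ _, ?_⟩,
    ?_, fun v => Set.mem_univ _⟩
  · rintro ⟨a, haD⟩ ⟨b, hbD⟩ h
    obtain ⟨_, hadj, _⟩ := hP a haD
    have h' : P a = b := h
    show H.Adj a b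
    rw [← h']; exact hadj
  · constructor
    rintro ⟨a, haD⟩ ⟨b, hbD⟩ h
    obtain ⟨_, _, hinv⟩ := hP a haD
    have h' : P a = b := h
    show P b = a
    rw [← h', hinv]
  · rintro ⟨a, haD⟩ -
    obtain ⟨hPD, _, hinv⟩ := hP a haD
    refine ⟨⟨P a, hPD⟩, rfl, ?_⟩
    rintro ⟨c, hc⟩ h
    have h' : P a = c := h
    exact Subtype.ext h'.symm

lemma matching_to_pairing {U : Type*} (H : SimpleGraph U) (D : Set U)
    (M : (H.induce D).Subgraph) (hM : M.IsPerfectMatching) :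
    ∃ P : U → U, IsPairing H D P := by
  classical
  choose f hf hu using fun v : D => hM.1 (hM.2 v)
  refine ⟨fun v => if h : v ∈ D then (f ⟨v, h⟩ : U) else v, ?_⟩
  intro v hv
  have hadj : (H.induce D).Adj ⟨v, hv⟩ (f ⟨v, hv⟩) := M.adj_sub (hf ⟨v, hv⟩)
  have hmem : (f ⟨v, hv⟩ : U) ∈ D := (f ⟨v, hv⟩).2
  refine ⟨by simp [hv, hmem], by simpa [hv, hmem] using hadj, ?_⟩
  simp only [hv, hmem, dif_pos]
  have : f (f ⟨v, hv⟩) = ⟨v, hv⟩ := (hu (f ⟨v, hv⟩) ⟨v, hv⟩ ((hf ⟨v, hv⟩).symm)).symm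
  simp [Subtype.coe_eta, this]

lemma pairing_extend {U : Type*} (H : SimpleGraph U) (D : Set U) (P : U → U)
    (hP : IsPairing H D P) {a b : U} (hab : H.Adj a b) (ha : a ∉ D) (hb : b ∉ D) :
    ∃ P', IsPairing H (insert a (insert b D)) P' := by
  classical
  have hne : a ≠ b := hab.ne
  refine ⟨fun v => if v = a then b else if v = b then a else P v, ?_⟩
  have e1 : (fun v => if v = a then b else if v = b then a else P v) a = b := by simp
  have e2 : (fun v => if v = a then b else if v = b then a else P v) b = a := by
    simp [Ne.symm hne]
  have e3 : ∀ v, v ≠ a → v ≠ b → (fun v => if v = a then b else if v = b then a else P v) v = P v := by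
    intro v h1 h2; simp [h1, h2]
  intro v hv
  rcases Set.mem_insert_iff.mp hv with h | hv'
  · rw [h, e1, e2]
    exact ⟨Set.mem_insert_of_mem _ (Set.mem_insert _ _), hab, rfl⟩
  rcases Set.mem_insert_iff.mp hv' with h | hvD
  · rw [h, e2, e1]
    exact ⟨Set.mem_insert _ _, hab.symm, rfl⟩
  · have h1 : v ≠ a := fun h => ha (h ▸ hvD)
    have h2 : v ≠ b := fun h => hb (h ▸ hvD)
    obtain ⟨hPD, hadj, hinv⟩ := hP v hvD
    have h3 : P v ≠ a := fun h => ha (h ▸ hPD)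
    have h4 : P v ≠ b := fun h => hb (h ▸ hPD)
    rw [e3 v h1 h2, e3 (P v) h3 h4]
    exact ⟨Set.mem_insert_of_mem _ (Set.mem_insert_of_mem _ hPD), hadj, hinv⟩

lemma exists_pds {U : Type*} [Fintype U] (H : SimpleGraph U) (h : H.NoIsolated) :
    ∃ D : Set U, H.Dominating D ∧ ∃ P, IsPairing H D P := by
  classical
  suffices hA : ∀ A : Finset U, ∃ D : Set U,
      (∀ v ∈ A, ∃ u ∈ D, u = v ∨ H.Adj u v) ∧ ∃ P, IsPairing H D P by
    obtain ⟨D, h1, h2⟩ := hA Finset.univ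
    exact ⟨D, fun v => h1 v (Finset.mem_univ v), h2⟩
  intro A
  induction A using Finset.induction_on with
  | empty => exact ⟨∅, by simp, id, fun v hv => absurd hv (Set.notMem_empty v)⟩
  | insert _ _ haA IH =>
    rename_i a A
    obtain ⟨D, hdom, P, hP⟩ := IH
    by_cases hd : ∃ d ∈ D, d = a ∨ H.Adj d a
    · exact ⟨D, fun v hv => by
        rcases Finset.mem_insert.mp hv with rfl | hv
        · exact hd
        · exact hdom v hv, P, hP⟩
    · push_neg at hd
      obtain ⟨b, hb⟩ := h a
      have haD : a ∉ D := fun hh => (hd a hh).1 rfl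
      have hbD : b ∉ D := fun hh => (hd b hh).2 hb
      obtain ⟨P', hP'⟩ := pairing_extend H D P hP hb.symm haD hbD
      refine ⟨insert a (insert b D), fun v hv => ?_, P', hP'⟩
      rcases Finset.mem_insert.mp hv with rfl | hv
      · exact ⟨v, Set.mem_insert _ _, Or.inl rfl⟩
      · obtain ⟨d, hd1, hd2⟩ := hdom v hv
        exact ⟨d, Set.mem_insert_of_mem _ (Set.mem_insert_of_mem _ hd1), hd2⟩

lemma appendPath_adj_inl_inl {G : SimpleGraph V} {u : V} {ℓ : ℕ} {a b : V} :
    (appendPath G u ℓ).Adj (Sum.inl a) (Sum.inl b) ↔ G.Adj a b := Iff.rfl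

lemma appendPath_adj_inl_inr {G : SimpleGraph V} {u : V} {ℓ : ℕ} {a : V} {j : Fin ℓ} :
    (appendPath G u ℓ).Adj (Sum.inl a) (Sum.inr j) ↔ a = u ∧ (j : ℕ) = 0 := Iff.rfl

lemma appendPath_adj_inr_inl {G : SimpleGraph V} {u : V} {ℓ : ℕ} {b : V} {i : Fin ℓ} :
    (appendPath G u ℓ).Adj (Sum.inr i) (Sum.inl b) ↔ b = u ∧ (i : ℕ) = 0 := Iff.rfl

lemma appendPath_adj_inr_inr {G : SimpleGraph V} {u : V} {ℓ : ℕ} {i j : Fin ℓ} :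
    (appendPath G u ℓ).Adj (Sum.inr i) (Sum.inr j) ↔ (i : ℕ) + 1 = j ∨ (j : ℕ) + 1 = i := Iff.rfl

lemma appendPath_noIsolated {G : SimpleGraph V} (hG : G.NoIsolated) (u : V) (ℓ : ℕ) :
    (appendPath G u ℓ).NoIsolated := by
  rintro (a | i)
  · obtain ⟨w, hw⟩ := hG a
    exact ⟨Sum.inl w, hw⟩
  · by_cases h1 : (i : ℕ) + 1 < ℓ
    · exact ⟨Sum.inr ⟨(i : ℕ) + 1, h1⟩, Or.inr rfl⟩
    · by_cases h2 : 0 < (i : ℕ)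
      · refine ⟨Sum.inr ⟨(i : ℕ) - 1, lt_of_le_of_lt (Nat.sub_le _ _) i.2⟩, Or.inl ?_⟩
        simp [Nat.sub_add_cancel h2]
      · exact ⟨Sum.inl u, rfl, by omega⟩
theorem stmt13 {V : Type*} [Fintype V] (G : SimpleGraph V) (hG : G.NoIsolated)
    (hvt : ∀ u v : V, ∃ e : G ≃g G, e u = v) (u : V) (ℓ : ℕ) :
    G.pairedDomNum ≤ (appendPath G u ℓ).pairedDomNum := by
  classical
  set H := appendPath G u ℓ with hH
  -- the set defining the RHS is nonempty
  have hne : {n | ∃ D : Set (V ⊕ Fin ℓ), H.PairedDominating D ∧ D.ncard = n}.Nonempty := by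
    obtain ⟨D, hdom, P, hP⟩ := exists_pds H (appendPath_noIsolated hG u ℓ)
    exact ⟨D.ncard, D, ⟨hdom, pairing_to_matching H D P hP⟩, rfl⟩
  refine le_csInf hne ?_
  rintro n ⟨D, ⟨hdom, M, hM⟩, rfl⟩
  obtain ⟨P, hP⟩ := matching_to_pairing H D M hM
  -- S : vertices of G matched within G
  set S : Set V := {v | Sum.inl v ∈ D ∧ ∃ w : V, P (Sum.inl v) = Sum.inl w} with hS
  -- the induced pairing on S
  set Q : V → V := fun v => Sum.elim id (fun _ => v) (P (Sum.inl v)) with hQ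
  have hQS : IsPairing G S Q := by
    intro v hv
    obtain ⟨hvD, w, hw⟩ := hv
    obtain ⟨hPD, hadj, hinv⟩ := hP (Sum.inl v) hvD
    have hQv : Q v = w := by rw [hQ]; simp only; rw [hw]; rfl
    have hPw : P (Sum.inl w) = Sum.inl v := by rw [← hw, hinv]
    rw [hQv]
    refine ⟨⟨hw ▸ hPD, v, hPw⟩, ?_, ?_⟩
    · exact appendPath_adj_inl_inl.mp (hw ▸ hadj)
    · rw [hQ]; simp only; rw [hPw]; rfl
  have hSsub : Sum.inl '' S ⊆ D := by rintro x ⟨v, hv, rfl⟩; exact hv.1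
  have hScard : S.ncard ≤ D.ncard := by
    rw [← Set.ncard_image_of_injective S Sum.inl_injective]
    exact Set.ncard_le_ncard hSsub D.toFinite
  -- main structural claim
  have claim : ∀ v : V, (∃ w ∈ S, w = v ∨ G.Adj w v) ∨
      ((v = u ∨ G.Adj u v) ∧ Sum.inl u ∈ D ∧ u ∉ S ∧ ∃ j : Fin ℓ, Sum.inr j ∈ D) ∨
      (v = u ∧ ∃ i : Fin ℓ, Sum.inr i ∈ D) := by
    intro v
    obtain ⟨d, hd, hcase⟩ := hdom (Sum.inl v)
    rcases d with w | i
    · have hwv : w = v ∨ G.Adj w v := by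
        rcases hcase with h | h
        · exact Or.inl (Sum.inl.inj h)
        · exact Or.inr (appendPath_adj_inl_inl.mp h)
      by_cases hwS : ∃ w', P (Sum.inl w) = Sum.inl w'
      · exact Or.inl ⟨w, ⟨hd, hwS⟩, hwv⟩
      · obtain ⟨hPD, hadj, hinv⟩ := hP (Sum.inl w) hd
        rcases hPm : P (Sum.inl w) with w' | j
        · exact absurd ⟨w', hPm⟩ hwS
        · rw [hPm] at hadj hPD
          obtain ⟨rfl, -⟩ := appendPath_adj_inl_inr.mp hadj
          refine Or.inr (Or.inl ⟨?_, hd, ?_, j, hPD⟩)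
          · rcases hwv with rfl | h
            · exact Or.inl rfl
            · exact Or.inr h
          · rintro ⟨-, w'', hw''⟩
            rw [hPm] at hw''
            exact Sum.inr_ne_inl hw''
    · rcases hcase with h | h
      · exact (Sum.inr_ne_inl h).elim
      · obtain ⟨rfl, -⟩ := appendPath_adj_inr_inl.mp h
        exact Or.inr (Or.inr ⟨rfl, i, hd⟩)
  by_cases hSdom : G.Dominating S
  · calc G.pairedDomNum ≤ S.ncard :=
          Nat.sInf_le ⟨S, ⟨hSdom, pairing_to_matching G S Q hQS⟩, rfl⟩
      _ ≤ D.ncard := hScard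
  · -- repair case
    obtain ⟨v0, hv0⟩ : ∃ v0, ¬ ∃ w ∈ S, w = v0 ∨ G.Adj w v0 := by
      by_contra hc
      push_neg at hc
      exact hSdom hc
    have hcl := claim v0
    rcases hcl with h | hcl
    · exact absurd h hv0
    -- u is not in S
    have huS : u ∉ S := by
      intro huS'
      rcases hcl with ⟨h1, -, h2, -⟩ | ⟨he, -⟩
      · exact h2 huS'
      · exact hv0 ⟨u, huS', Or.inl he.symm⟩
    -- a neighbor of u outside S
    have hw0 : ∃ w0, G.Adj u w0 ∧ w0 ∉ S := by
      have key : v0 = u ∨ G.Adj u v0 := by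
        rcases hcl with ⟨h1, -⟩ | ⟨he, -⟩
        · exact h1
        · exact Or.inl he
      rcases key with rfl | hadj
      · obtain ⟨w, hw⟩ := hG v0
        refine ⟨w, hw.symm, fun hwS => hv0 ⟨w, hwS, Or.inr hw⟩⟩
      · exact ⟨v0, hadj, fun hS' => hv0 ⟨v0, hS', Or.inl rfl⟩⟩
    obtain ⟨w0, hadj0, hw0S⟩ := hw0
    -- two elements of D outside Sum.inl '' S
    have hpair : ∃ x y, x ∈ D ∧ y ∈ D ∧ x ∉ Sum.inl '' S ∧ y ∉ Sum.inl '' S ∧ x ≠ y := by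
      rcases hcl with ⟨-, huD, -, j, hj⟩ | ⟨-, i, hiD⟩
      · refine ⟨Sum.inl u, Sum.inr j, huD, hj, ?_, ?_, by simp⟩
        · rintro ⟨v', hv', hv'e⟩
          rw [Sum.inl_injective hv'e] at hv'
          exact huS hv'
        · rintro ⟨v', -, hv'e⟩
          exact Sum.inl_ne_inr hv'e
      · obtain ⟨hPD, hadj, hinv⟩ := hP (Sum.inr i) hiD
        rcases hPm : P (Sum.inr i) with w | j
        · rw [hPm] at hadj hPD
          obtain ⟨he, -⟩ := appendPath_adj_inr_inl.mp hadj
          rw [he] at hPD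
          refine ⟨Sum.inl u, Sum.inr i, hPD, hiD, ?_, ?_, by simp⟩
          · rintro ⟨v', hv', hv'e⟩
            rw [Sum.inl_injective hv'e] at hv'
            exact huS hv'
          · rintro ⟨v', -, hv'e⟩
            exact Sum.inl_ne_inr hv'e
        · rw [hPm] at hadj hPD
          have hij : (i : ℕ) ≠ (j : ℕ) := by
            rcases appendPath_adj_inr_inr.mp hadj with h | h <;> omega
          refine ⟨Sum.inr i, Sum.inr j, hiD, hPD, ?_, ?_, ?_⟩
          · rintro ⟨v', -, hv'e⟩; exact Sum.inl_ne_inr hv'e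
          · rintro ⟨v', -, hv'e⟩; exact Sum.inl_ne_inr hv'e
          · intro he
            exact hij (congrArg Fin.val (Sum.inr_injective he))
    obtain ⟨x, y, hxD, hyD, hxS, hyS, hxy⟩ := hpair
    -- the repaired dominating set
    have huw0 : u ≠ w0 := hadj0.ne
    obtain ⟨Q', hQ'⟩ := pairing_extend G S Q hQS hadj0 huS hw0S
    set DG : Set V := insert u (insert w0 S) with hDG
    have hDGdom : G.Dominating DG := by
      intro v
      rcases claim v with ⟨w, hwS', hw⟩ | ⟨h1, -⟩ | ⟨he, -⟩
      · exact ⟨w, Set.mem_insert_of_mem _ (Set.mem_insert_of_mem _ hwS'), hw⟩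
      · refine ⟨u, Set.mem_insert _ _, ?_⟩
        rcases h1 with rfl | h
        · exact Or.inl rfl
        · exact Or.inr h
      · exact ⟨u, Set.mem_insert _ _, Or.inl he.symm⟩
    have hDGcard : DG.ncard ≤ D.ncard := by
      have h1 : (Sum.inl '' S) ∪ {x, y} ⊆ D := by
        rintro z (hz | hz)
        · exact hSsub hz
        · rcases hz with rfl | rfl
          · exact hxD
          · exact hyD
      have hdisj : Disjoint (Sum.inl '' S) {x, y} := by
        rw [Set.disjoint_right]
        rintro z (rfl | rfl) <;> assumption
      have h2 : ((Sum.inl '' S) ∪ {x, y}).ncard = S.ncard + 2 := by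
        rw [Set.ncard_union_eq hdisj (Set.toFinite _) (Set.toFinite _),
          Set.ncard_image_of_injective S Sum.inl_injective, Set.ncard_pair hxy]
      calc DG.ncard ≤ (insert w0 S).ncard + 1 := Set.ncard_insert_le _ _
        _ ≤ S.ncard + 1 + 1 := by
            have := Set.ncard_insert_le w0 S
            omega
        _ = ((Sum.inl '' S) ∪ {x, y}).ncard := by rw [h2]
        _ ≤ D.ncard := Set.ncard_le_ncard h1 D.toFinite
    calc G.pairedDomNum ≤ DG.ncard :=
          Nat.sInf_le ⟨DG, ⟨hDGdom, pairing_to_matching G DG Q' hQ'⟩, rfl⟩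
      _ ≤ D.ncard := hDGcard
end

section
/- For any graphs G and H without isolated vertices, Γ(G × H) ≥ Γ(G)·Γ(H), where Γ denotes the upper domination number. -/
set_option linter.unusedVariables false
set_option linter.unnecessarySeqFocus false

open SimpleGraph

variable {V : Type*} {W : Type*}

lemma aux_dom_univ {V : Type*} (G : SimpleGraph V) : G.Dominating Set.univ :=
  fun v => ⟨v, Set.mem_univ v, Or.inl rfl⟩

lemma aux_bddAbove {V : Type*} [Fintype V] (G : SimpleGraph V) :
    BddAbove {n | ∃ D : Set V, G.MinimalDominating D ∧ D.ncard = n} := by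
  refine ⟨Fintype.card V, ?_⟩
  rintro n ⟨D, -, rfl⟩
  simpa [Set.ncard_univ, Nat.card_eq_fintype_card] using Set.ncard_le_ncard (Set.subset_univ D) Set.finite_univ

lemma aux_exists_minimal {V : Type*} [Fintype V] (G : SimpleGraph V) :
    ∃ D, G.MinimalDominating D := by
  have hne : {n | ∃ D : Set V, G.Dominating D ∧ D.ncard = n}.Nonempty :=
    ⟨_, Set.univ, aux_dom_univ G, rfl⟩
  obtain ⟨D, hD, hcard⟩ := Nat.sInf_mem hne
  refine ⟨D, hD, fun D' hsub hdom => ?_⟩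
  have h1 : sInf {n | ∃ D : Set V, G.Dominating D ∧ D.ncard = n} ≤ D'.ncard :=
    Nat.sInf_le ⟨D', hdom, rfl⟩
  exact Set.eq_of_subset_of_ncard_le hsub (hcard ▸ h1)

lemma aux_upper_spec {V : Type*} [Fintype V] (G : SimpleGraph V) :
    ∃ D, G.MinimalDominating D ∧ D.ncard = G.upperDomNum := by
  obtain ⟨D, hD⟩ := aux_exists_minimal G
  have hne : {n | ∃ D : Set V, G.MinimalDominating D ∧ D.ncard = n}.Nonempty := ⟨_, D, hD, rfl⟩
  exact Nat.sSup_mem hne (aux_bddAbove G)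

lemma aux_priv {V : Type*} {G : SimpleGraph V} {D : Set V} (hD : G.MinimalDominating D)
    {u : V} (hu : u ∈ D) (hB : ∃ w ∈ D, G.Adj w u) :
    ∃ q, G.Adj u q ∧ q ∉ D ∧ ∀ w ∈ D, G.Adj w q → w = u := by
  have hnd : ¬ G.Dominating (D \ {u}) := by
    intro h
    have heq := hD.2 _ Set.diff_subset h
    have : u ∈ D \ {u} := by rw [heq]; exact hu
    simp at this
  rw [SimpleGraph.Dominating] at hnd
  push_neg at hnd
  obtain ⟨q, hq⟩ := hnd
  obtain ⟨w, hw, hwq⟩ := hD.1 q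
  have hwu : w = u := by
    by_contra hne
    rcases hwq with rfl | hadj
    · exact (hq w ⟨hw, hne⟩).1 rfl
    · exact (hq w ⟨hw, hne⟩).2 hadj
  subst hwu
  rcases hwq with rfl | hadj
  · exfalso
    obtain ⟨w', hw', hadj'⟩ := hB
    exact (hq w' ⟨hw', hadj'.ne⟩).2 hadj'
  · refine ⟨q, hadj, ?_, ?_⟩
    · intro hqD
      exact (hq q ⟨hqD, hadj.ne'⟩).1 rfl
    · intro w hwD hadjw
      by_contra hne
      exact (hq w ⟨hwD, hne⟩).2 hadjw

lemma aux_extract {V : Type*} [Fintype V] {G : SimpleGraph V} {I S : Set V}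
    (hIS : I ⊆ S) (hSdom : G.Dominating S)
    (hpriv : ∀ x ∈ I, ∃ q, (x = q ∨ G.Adj x q) ∧ ∀ e' ∈ S, (e' = q ∨ G.Adj e' q) → e' = x) :
    ∃ D, G.MinimalDominating D ∧ I ⊆ D ∧ D ⊆ S := by
  have hne : {n | ∃ D : Set V, (I ⊆ D ∧ D ⊆ S ∧ G.Dominating D) ∧ D.ncard = n}.Nonempty :=
    ⟨S.ncard, S, ⟨hIS, subset_refl _, hSdom⟩, rfl⟩
  obtain ⟨D, ⟨hID, hDS, hdom⟩, hcard⟩ := Nat.sInf_mem hne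
  have hsubdom : ∀ D' ⊆ D, G.Dominating D' → I ⊆ D' := by
    intro D' hsub hdom' x hx
    obtain ⟨q, hq1, hq2⟩ := hpriv x hx
    obtain ⟨e', he', hde⟩ := hdom' q
    have : e' = x := hq2 e' (hDS (hsub he')) hde
    exact this ▸ he'
  refine ⟨D, ⟨hdom, ?_⟩, hID, hDS⟩
  intro D' hsub hdom'
  have hI' := hsubdom D' hsub hdom'
  have hle : sInf {n | ∃ D : Set V, (I ⊆ D ∧ D ⊆ S ∧ G.Dominating D) ∧ D.ncard = n} ≤ D'.ncard :=
    Nat.sInf_le ⟨D', ⟨hI', hsub.trans hDS, hdom'⟩, rfl⟩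
  exact Set.eq_of_subset_of_ncard_le hsub (hcard ▸ hle)

lemma aux_ncard_prod {V W : Type*} [Fintype V] [Fintype W] (s : Set V) (t : Set W) :
    (s ×ˢ t).ncard = s.ncard * t.ncard := by
  rw [← Nat.card_coe_set_eq, ← Nat.card_coe_set_eq, ← Nat.card_coe_set_eq,
    ← Nat.card_prod]
  exact Nat.card_congr (Equiv.Set.prod s t)
lemma aux_main {V W : Type*} [Fintype V] [Fintype W] (G : SimpleGraph V) (H : SimpleGraph W)
    {D₁ : Set V} {D₂ : Set W} (hD₁ : G.MinimalDominating D₁) (hD₂ : H.MinimalDominating D₂) :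
    ∃ D : Set (V × W), (G.tensor H).MinimalDominating D ∧ D₁.ncard * D₂.ncard ≤ D.ncard := by
  classical
  set A₁ : Set V := {u | u ∈ D₁ ∧ ∀ w ∈ D₁, ¬ G.Adj w u} with hA₁def
  set A₂ : Set W := {u | u ∈ D₂ ∧ ∀ w ∈ D₂, ¬ H.Adj w u} with hA₂def
  have hA₁mem : ∀ u, u ∈ A₁ ↔ (u ∈ D₁ ∧ ∀ w ∈ D₁, ¬ G.Adj w u) := fun u => Iff.rfl
  have hA₂mem : ∀ u, u ∈ A₂ ↔ (u ∈ D₂ ∧ ∀ w ∈ D₂, ¬ H.Adj w u) := fun u => Iff.rfl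
  have hex₁ : ∀ u, ∃ q, u ∈ D₁ → u ∉ A₁ →
      (G.Adj u q ∧ q ∉ D₁ ∧ ∀ w ∈ D₁, G.Adj w q → w = u) := by
    intro u
    by_cases h : u ∈ D₁ ∧ u ∉ A₁
    · have hB : ∃ w ∈ D₁, G.Adj w u := by
        by_contra hc; push_neg at hc; exact h.2 ⟨h.1, hc⟩
      obtain ⟨q, hq⟩ := aux_priv hD₁ h.1 hB
      exact ⟨q, fun _ _ => hq⟩
    · exact ⟨u, fun h1 h2 => absurd ⟨h1, h2⟩ h⟩
  choose p₁ hp₁ using hex₁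
  have hex₂ : ∀ v, ∃ q, v ∈ D₂ → v ∉ A₂ →
      (H.Adj v q ∧ q ∉ D₂ ∧ ∀ w ∈ D₂, H.Adj w q → w = v) := by
    intro v
    by_cases h : v ∈ D₂ ∧ v ∉ A₂
    · have hB : ∃ w ∈ D₂, H.Adj w v := by
        by_contra hc; push_neg at hc; exact h.2 ⟨h.1, hc⟩
      obtain ⟨q, hq⟩ := aux_priv hD₂ h.1 hB
      exact ⟨q, fun _ _ => hq⟩
    · exact ⟨v, fun h1 h2 => absurd ⟨h1, h2⟩ h⟩
  choose p₂ hp₂ using hex₂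
  set S : Set (V × W) :=
    {e | e.1 ∈ A₁ ∨ (e.1 ∈ D₁ ∧ e.1 ∉ A₁ ∧ e.2 ∈ D₂) ∨ (e.1 ∉ D₁ ∧ e.2 ∈ A₂)} with hSdef
  have hSmem : ∀ e : V × W, e ∈ S ↔
      (e.1 ∈ A₁ ∨ (e.1 ∈ D₁ ∧ e.1 ∉ A₁ ∧ e.2 ∈ D₂) ∨ (e.1 ∉ D₁ ∧ e.2 ∈ A₂)) := fun e => Iff.rfl
  set φ : V × W → V × W := fun e => (if e.1 ∈ A₁ ∨ e.2 ∉ A₂ then e.1 else p₁ e.1,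
    if e.2 ∈ A₂ ∨ e.1 ∉ A₁ then e.2 else p₂ e.2) with hφdef
  have hφ1 : ∀ u v, u ∈ A₁ → v ∈ A₂ → φ (u, v) = (u, v) := by
    intro u v h1 h2; simp only [hφdef]
    rw [if_pos (Or.inl h1 : (u,v).1 ∈ A₁ ∨ (u,v).2 ∉ A₂),
      if_pos (Or.inl h2 : (u,v).2 ∈ A₂ ∨ (u,v).1 ∉ A₁)]
  have hφ2 : ∀ u v, u ∈ A₁ → v ∉ A₂ → φ (u, v) = (u, p₂ v) := by
    intro u v h1 h2; simp only [hφdef]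
    rw [if_pos (Or.inl h1 : (u,v).1 ∈ A₁ ∨ (u,v).2 ∉ A₂),
      if_neg (fun h => h.elim h2 (fun h' => h' h1) : ¬((u,v).2 ∈ A₂ ∨ (u,v).1 ∉ A₁))]
  have hφ3 : ∀ u v, u ∉ A₁ → v ∈ A₂ → φ (u, v) = (p₁ u, v) := by
    intro u v h1 h2; simp only [hφdef]
    rw [if_neg (fun h => h.elim h1 (fun h' => h' h2) : ¬((u,v).1 ∈ A₁ ∨ (u,v).2 ∉ A₂)),
      if_pos (Or.inl h2 : (u,v).2 ∈ A₂ ∨ (u,v).1 ∉ A₁)]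
  have hφ4 : ∀ u v, u ∉ A₁ → v ∉ A₂ → φ (u, v) = (u, v) := by
    intro u v h1 h2; simp only [hφdef]
    rw [if_pos (Or.inr h2 : (u,v).1 ∈ A₁ ∨ (u,v).2 ∉ A₂),
      if_pos (Or.inr h1 : (u,v).2 ∈ A₂ ∨ (u,v).1 ∉ A₁)]
  -- S is dominating
  have hSdom : (G.tensor H).Dominating S := by
    rintro ⟨x, y⟩
    obtain ⟨u, hu, hux⟩ := hD₁.1 x
    obtain ⟨v, hv, hvy⟩ := hD₂.1 y
    by_cases hx : x ∈ D₁
    · by_cases hy : y ∈ D₂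
      · refine ⟨(x, y), ?_, Or.inl rfl⟩
        by_cases hxA : x ∈ A₁
        · exact Or.inl hxA
        · exact Or.inr (Or.inl ⟨hx, hxA, hy⟩)
      · have hvy' : H.Adj v y := by
          rcases hvy with rfl | h
          · exact absurd hv hy
          · exact h
        by_cases hxA : x ∈ A₁
        · exact ⟨(x, y), Or.inl hxA, Or.inl rfl⟩
        · have hB : ¬ ∀ w ∈ D₁, ¬ G.Adj w x := fun h => hxA ⟨hx, h⟩
          push_neg at hB
          obtain ⟨w, hw, hwx⟩ := hB
          refine ⟨(w, v), ?_, Or.inr (show G.Adj _ _ ∧ H.Adj _ _ from ⟨hwx, hvy'⟩)⟩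
          by_cases hwA : w ∈ A₁
          · exact Or.inl hwA
          · exact Or.inr (Or.inl ⟨hw, hwA, hv⟩)
    · have hux' : G.Adj u x := by
        rcases hux with rfl | h
        · exact absurd hu hx
        · exact h
      by_cases hyA : y ∈ A₂
      · exact ⟨(x, y), Or.inr (Or.inr ⟨hx, hyA⟩), Or.inl rfl⟩
      · by_cases hy : y ∈ D₂
        · have hB : ¬ ∀ w ∈ D₂, ¬ H.Adj w y := fun h => hyA ⟨hy, h⟩
          push_neg at hB
          obtain ⟨w, hw, hwy⟩ := hB
          refine ⟨(u, w), ?_, Or.inr (show G.Adj _ _ ∧ H.Adj _ _ from ⟨hux', hwy⟩)⟩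
          by_cases huA : u ∈ A₁
          · exact Or.inl huA
          · exact Or.inr (Or.inl ⟨hu, huA, hw⟩)
        · have hvy' : H.Adj v y := by
            rcases hvy with rfl | h
            · exact absurd hv hy
            · exact h
          refine ⟨(u, v), ?_, Or.inr (show G.Adj _ _ ∧ H.Adj _ _ from ⟨hux', hvy'⟩)⟩
          by_cases huA : u ∈ A₁
          · exact Or.inl huA
          · exact Or.inr (Or.inl ⟨hu, huA, hv⟩)
  -- private neighbours
  have hkey : ∀ e ∈ D₁ ×ˢ D₂, ∃ q : V × W,
      (φ e = q ∨ (G.tensor H).Adj (φ e) q) ∧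
      ∀ e' ∈ S, (e' = q ∨ (G.tensor H).Adj e' q) → e' = φ e := by
    rintro ⟨u, v⟩ ⟨hu, hv⟩
    by_cases hA : u ∈ A₁ <;> by_cases hB : v ∈ A₂
    · rw [hφ1 u v hA hB]
      refine ⟨(u, v), Or.inl rfl, ?_⟩
      rintro ⟨c, d⟩ hS (heq | hadj)
      · exact heq
      · exfalso
        rcases (hSmem _).mp hS with h | h | h
        · exact hA.2 c h.1 (show G.Adj _ _ ∧ H.Adj _ _ from hadj).1
        · exact hA.2 c h.1 (show G.Adj _ _ ∧ H.Adj _ _ from hadj).1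
        · exact hB.2 d h.2.1 (show G.Adj _ _ ∧ H.Adj _ _ from hadj).2
    · have hp := hp₂ v hv hB
      rw [hφ2 u v hA hB]
      refine ⟨(u, p₂ v), Or.inl rfl, ?_⟩
      rintro ⟨c, d⟩ hS (heq | hadj)
      · exact heq
      · exfalso
        rcases (hSmem _).mp hS with h | h | h
        · exact hA.2 c h.1 (show G.Adj _ _ ∧ H.Adj _ _ from hadj).1
        · exact hA.2 c h.1 (show G.Adj _ _ ∧ H.Adj _ _ from hadj).1
        · exact hB (hp.2.2 d h.2.1 (show G.Adj _ _ ∧ H.Adj _ _ from hadj).2 ▸ h.2)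
    · have hp := hp₁ u hu hA
      rw [hφ3 u v hA hB]
      refine ⟨(p₁ u, v), Or.inl rfl, ?_⟩
      rintro ⟨c, d⟩ hS (heq | hadj)
      · exact heq
      · exfalso
        rcases (hSmem _).mp hS with h | h | h
        · exact hA (hp.2.2 c h.1 (show G.Adj _ _ ∧ H.Adj _ _ from hadj).1 ▸ h)
        · exact hB.2 d h.2.2 (show G.Adj _ _ ∧ H.Adj _ _ from hadj).2
        · exact hB.2 d h.2.1 (show G.Adj _ _ ∧ H.Adj _ _ from hadj).2
    · have hp1 := hp₁ u hu hA
      have hp2 := hp₂ v hv hB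
      rw [hφ4 u v hA hB]
      refine ⟨(p₁ u, p₂ v), Or.inr (show G.Adj _ _ ∧ H.Adj _ _ from ⟨hp1.1, hp2.1⟩), ?_⟩
      rintro ⟨c, d⟩ hS (heq | hadj)
      · exfalso
        injection heq with hc hd
        rcases (hSmem _).mp hS with h | h | h
        · exact hp1.2.1 (hc ▸ h.1)
        · exact hp1.2.1 (hc ▸ h.1)
        · exact hp2.2.1 (hd ▸ h.2.1)
      · rcases (hSmem _).mp hS with h | h | h
        · exact absurd (hp1.2.2 c h.1 (show G.Adj _ _ ∧ H.Adj _ _ from hadj).1 ▸ h) hA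
        · have hc := hp1.2.2 c h.1 (show G.Adj _ _ ∧ H.Adj _ _ from hadj).1
          have hd := hp2.2.2 d h.2.2 (show G.Adj _ _ ∧ H.Adj _ _ from hadj).2
          rw [hc, hd]
        · exact absurd (hp2.2.2 d h.2.1 (show G.Adj _ _ ∧ H.Adj _ _ from hadj).2 ▸ h.2) hB
  -- inverse map and injectivity
  have hexinv₁ : ∀ x : V, ∃ z, (∃ w ∈ D₁, G.Adj w x) → (z ∈ D₁ ∧ G.Adj z x) := by
    intro x
    by_cases h : ∃ w ∈ D₁, G.Adj w x
    · obtain ⟨w, hw, hwx⟩ := h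
      exact ⟨w, fun _ => ⟨hw, hwx⟩⟩
    · exact ⟨x, fun hh => absurd hh h⟩
  choose i₁ hi₁ using hexinv₁
  have hexinv₂ : ∀ y : W, ∃ z, (∃ w ∈ D₂, H.Adj w y) → (z ∈ D₂ ∧ H.Adj z y) := by
    intro y
    by_cases h : ∃ w ∈ D₂, H.Adj w y
    · obtain ⟨w, hw, hwy⟩ := h
      exact ⟨w, fun _ => ⟨hw, hwy⟩⟩
    · exact ⟨y, fun hh => absurd hh h⟩
  choose i₂ hi₂ using hexinv₂
  set ψ : V × W → V × W := fun e => (if e.1 ∈ D₁ then e.1 else i₁ e.1,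
    if e.2 ∈ D₂ then e.2 else i₂ e.2) with hψdef
  have hψφ : ∀ e ∈ D₁ ×ˢ D₂, ψ (φ e) = e := by
    rintro ⟨u, v⟩ ⟨hu, hv⟩
    by_cases hA : u ∈ A₁ <;> by_cases hB : v ∈ A₂
    · rw [hφ1 u v hA hB]; simp only [hψdef]
      rw [if_pos (hu : (u,v).1 ∈ D₁), if_pos (hv : (u,v).2 ∈ D₂)]
    · have hp := hp₂ v hv hB
      rw [hφ2 u v hA hB]; simp only [hψdef]
      rw [if_pos (hu : (u, p₂ v).1 ∈ D₁), if_neg (hp.2.1 : ¬ (u, p₂ v).2 ∈ D₂)]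
      have h2 := hi₂ (p₂ v) ⟨v, hv, hp.1⟩
      have hiv : i₂ (p₂ v) = v := hp.2.2 _ h2.1 h2.2
      rw [hiv]
    · have hp := hp₁ u hu hA
      rw [hφ3 u v hA hB]; simp only [hψdef]
      rw [if_neg (hp.2.1 : ¬ (p₁ u, v).1 ∈ D₁), if_pos (hv : (p₁ u, v).2 ∈ D₂)]
      have h1 := hi₁ (p₁ u) ⟨u, hu, hp.1⟩
      have hiu : i₁ (p₁ u) = u := hp.2.2 _ h1.1 h1.2
      rw [hiu]
    · rw [hφ4 u v hA hB]; simp only [hψdef]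
      rw [if_pos (hu : (u,v).1 ∈ D₁), if_pos (hv : (u,v).2 ∈ D₂)]
  have hinj : Set.InjOn φ (D₁ ×ˢ D₂) := fun a ha b hb h => by
    rw [← hψφ a ha, ← hψφ b hb, h]
  -- image is inside S
  have hIS : φ '' (D₁ ×ˢ D₂) ⊆ S := by
    rintro _ ⟨⟨u, v⟩, ⟨hu, hv⟩, rfl⟩
    by_cases hA : u ∈ A₁ <;> by_cases hB : v ∈ A₂
    · rw [hφ1 u v hA hB]; exact (hSmem _).mpr (Or.inl hA)
    · rw [hφ2 u v hA hB]; exact (hSmem _).mpr (Or.inl hA)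
    · rw [hφ3 u v hA hB]
      exact (hSmem _).mpr (Or.inr (Or.inr ⟨(hp₁ u hu hA).2.1, hB⟩))
    · rw [hφ4 u v hA hB]; exact (hSmem _).mpr (Or.inr (Or.inl ⟨hu, hA, hv⟩))
  have hprivI : ∀ x ∈ φ '' (D₁ ×ˢ D₂), ∃ q, (x = q ∨ (G.tensor H).Adj x q) ∧
      ∀ e' ∈ S, (e' = q ∨ (G.tensor H).Adj e' q) → e' = x := by
    rintro _ ⟨e, he, rfl⟩; exact hkey e he
  obtain ⟨D, hDmin, hID, hDS⟩ := aux_extract hIS hSdom hprivI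
  refine ⟨D, hDmin, ?_⟩
  calc D₁.ncard * D₂.ncard = (D₁ ×ˢ D₂).ncard := (aux_ncard_prod _ _).symm
    _ = (φ '' (D₁ ×ˢ D₂)).ncard := (Set.ncard_image_of_injOn hinj).symm
    _ ≤ D.ncard := Set.ncard_le_ncard hID (Set.toFinite D)

theorem stmt15 {V W : Type*} [Fintype V] [Fintype W] (G : SimpleGraph V) (H : SimpleGraph W)
    (hG : G.NoIsolated) (hH : H.NoIsolated) :
    G.upperDomNum * H.upperDomNum ≤ (G.tensor H).upperDomNum := by
  obtain ⟨D₁, hD₁, hc₁⟩ := aux_upper_spec G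
  obtain ⟨D₂, hD₂, hc₂⟩ := aux_upper_spec H
  obtain ⟨D, hDmin, hle⟩ := aux_main G H hD₁ hD₂
  have hmem : D.ncard ∈
      {n | ∃ D' : Set (V × W), (G.tensor H).MinimalDominating D' ∧ D'.ncard = n} := ⟨D, hDmin, rfl⟩
  calc G.upperDomNum * H.upperDomNum = D₁.ncard * D₂.ncard := by rw [hc₁, hc₂]
    _ ≤ D.ncard := hle
    _ ≤ (G.tensor H).upperDomNum := le_csSup (aux_bddAbove _) hmem
end

section
/- For every n ≥ 2, the upper domination number of the 2 × n rook graph G_n = K_2 □ K_n equals n. -/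
set_option linter.unusedVariables false
set_option linter.unnecessarySeqFocus false

open SimpleGraph

variable {V : Type*} {W : Type*}

lemma fin2_cases (a : Fin 2) : a = 0 ∨ a = 1 := by omega

lemma fin2_ne01 : (0 : Fin 2) ≠ 1 := by decide

lemma fin2_eq_of_ne {a b c : Fin 2} (hb : b ≠ a) (hc : c ≠ a) : b = c := by omega

lemma rook_adj {n : ℕ} (p q : Fin 2 × Fin n) :
    ((⊤ : SimpleGraph (Fin 2)) □ (⊤ : SimpleGraph (Fin n))).Adj p q ↔
      (p.1 ≠ q.1 ∧ p.2 = q.2) ∨ (p.2 ≠ q.2 ∧ p.1 = q.1) := by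
  simp [SimpleGraph.boxProd_adj]

/-- Each row of the rook graph has ncard ≤ n. -/
lemma row_card_le {n : ℕ} (a : Fin 2) (R : Set (Fin 2 × Fin n)) (hR : ∀ p ∈ R, p.1 = a) :
    R.ncard ≤ n := by
  have hinj : Set.InjOn Prod.snd R := by
    intro p hp q hq h
    exact Prod.ext ((hR p hp).trans (hR q hq).symm) h
  calc R.ncard = (Prod.snd '' R).ncard := (Set.ncard_image_of_injOn hinj).symm
    _ ≤ (Set.univ : Set (Fin n)).ncard := by
        exact Set.ncard_le_ncard (Set.subset_univ _) Set.finite_univ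
    _ = n := by simp [Set.ncard_univ]

/-- Upper bound: any minimal dominating set has at most n elements. -/
lemma rook_minDom_le {n : ℕ} (hn : 2 ≤ n) (D : Set (Fin 2 × Fin n))
    (hD : ((⊤ : SimpleGraph (Fin 2)) □ (⊤ : SimpleGraph (Fin n))).MinimalDominating D) :
    D.ncard ≤ n := by
  set G := ((⊤ : SimpleGraph (Fin 2)) □ (⊤ : SimpleGraph (Fin n))) with hGdef
  by_contra hlt
  push_neg at hlt
  have hfin : D.Finite := Set.toFinite D
  -- split into rows
  set R0 : Set (Fin 2 × Fin n) := D ∩ {p | p.1 = 0} with hR0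
  set R1 : Set (Fin 2 × Fin n) := D ∩ {p | p.1 = 1} with hR1
  have hunion : D = R0 ∪ R1 := by
    ext p
    rcases fin2_cases p.1 with h | h <;> simp [hR0, hR1, h]
  have hdisj : Disjoint R0 R1 := by
    rw [Set.disjoint_left]
    rintro p ⟨-, h0⟩ ⟨-, h1⟩
    simp only [Set.mem_setOf_eq] at h0 h1
    rw [h0] at h1
    exact absurd h1 (by decide)
  have hcard : D.ncard = R0.ncard + R1.ncard := by
    rw [hunion, Set.ncard_union_eq hdisj (Set.toFinite _) (Set.toFinite _)]
  have h0le : R0.ncard ≤ n := row_card_le 0 R0 (fun p hp => hp.2)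
  have h1le : R1.ncard ≤ n := row_card_le 1 R1 (fun p hp => hp.2)
  -- both rows nonempty, and one row has ≥ 2 elements
  have h0pos : 1 ≤ R0.ncard := by omega
  have h1pos : 1 ≤ R1.ncard := by omega
  have h2 : 2 ≤ R0.ncard ∨ 2 ≤ R1.ncard := by omega
  -- Key: if u, u' distinct in same row and w in the other row, D \ {u} dominates.
  have key : ∀ u ∈ D, ∀ u' ∈ D, ∀ w ∈ D, u ≠ u' → u.1 = u'.1 → w.1 ≠ u.1 → False := by
    intro u hu u' hu' w hw hne hrow hwrow
    have hdom' : G.Dominating (D \ {u}) := by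
      intro v
      by_cases hv : v.1 = u.1
      · refine ⟨u', ⟨hu', by simp [hne.symm]⟩, ?_⟩
        by_cases hv2 : u'.2 = v.2
        · left; exact Prod.ext (hrow.symm.trans hv.symm) hv2
        · right
          rw [hGdef, rook_adj]
          right
          exact ⟨hv2, hrow.symm.trans hv.symm⟩
      · have hwu : w ≠ u := fun h => hwrow (by rw [h])
        refine ⟨w, ⟨hw, by simp [hwu]⟩, ?_⟩
        have hwv : w.1 = v.1 := fin2_eq_of_ne hwrow hv
        by_cases hv2 : w.2 = v.2
        · left; exact Prod.ext hwv hv2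
        · right
          rw [hGdef, rook_adj]
          right
          exact ⟨hv2, hwv⟩
    have heq := hD.2 (D \ {u}) Set.diff_subset hdom'
    rw [← heq] at hu
    simp at hu
  rcases h2 with h2 | h2
  · obtain ⟨u, u', hu, hu', hne⟩ := (Set.one_lt_ncard_iff (Set.toFinite _)).mp h2
    obtain ⟨w, hw⟩ := Set.nonempty_of_ncard_ne_zero (by omega : R1.ncard ≠ 0)
    exact key u hu.1 u' hu'.1 w hw.1 hne (hu.2.trans hu'.2.symm)
      (by rw [hw.2, hu.2]; decide)
  · obtain ⟨u, u', hu, hu', hne⟩ := (Set.one_lt_ncard_iff (Set.toFinite _)).mp h2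
    obtain ⟨w, hw⟩ := Set.nonempty_of_ncard_ne_zero (by omega : R0.ncard ≠ 0)
    exact key u hu.1 u' hu'.1 w hw.1 hne (hu.2.trans hu'.2.symm)
      (by rw [hw.2, hu.2]; decide)

lemma rook_row_minDom {n : ℕ} (hn : 2 ≤ n) :
    ((⊤ : SimpleGraph (Fin 2)) □ (⊤ : SimpleGraph (Fin n))).MinimalDominating
      {p : Fin 2 × Fin n | p.1 = 0} := by
  set G := ((⊤ : SimpleGraph (Fin 2)) □ (⊤ : SimpleGraph (Fin n))) with hGdef
  constructor
  · rintro ⟨a, b⟩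
    refine ⟨(0, b), rfl, ?_⟩
    rcases fin2_cases a with h | h
    · left; rw [h]
    · right
      rw [hGdef, rook_adj]
      left
      refine ⟨?_, rfl⟩
      show (0 : Fin 2) ≠ (a, b).1
      rw [h]
      exact fin2_ne01
  · intro D' hsub hdom
    apply Set.Subset.antisymm hsub
    intro p hp
    simp only [Set.mem_setOf_eq] at hp
    obtain ⟨u, hu, hor⟩ := hdom (1, p.2)
    have hu0 : u.1 = 0 := hsub hu
    rcases hor with h | h
    · exfalso
      rw [h] at hu0
      exact fin2_ne01 hu0.symm
    · rw [hGdef, rook_adj] at h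
      rcases h with ⟨h1, h2⟩ | ⟨h1, h2⟩
      · have : u = p := Prod.ext (hu0.trans hp.symm) h2
        rwa [this] at hu
      · exfalso
        rw [hu0] at h2
        exact fin2_ne01 h2

lemma rook_row_ncard {n : ℕ} : ({p : Fin 2 × Fin n | p.1 = 0}).ncard = n := by
  have himg : {p : Fin 2 × Fin n | p.1 = 0} = (fun b => ((0 : Fin 2), b)) '' Set.univ := by
    ext ⟨a, b⟩
    simp only [Set.mem_setOf_eq, Set.image_univ, Set.mem_range]
    constructor
    · intro h; exact ⟨b, by rw [Prod.mk.injEq]; exact ⟨h.symm, rfl⟩⟩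
    · rintro ⟨c, hc⟩
      rw [Prod.mk.injEq] at hc
      exact hc.1.symm
  rw [himg, Set.ncard_image_of_injective _ (fun a b h => (Prod.mk.injEq _ _ _ _).mp h |>.2)]
  simp [Set.ncard_univ]

theorem stmt16 (n : ℕ) (hn : 2 ≤ n) :
    ((⊤ : SimpleGraph (Fin 2)) □ (⊤ : SimpleGraph (Fin n))).upperDomNum = n := by
  rw [SimpleGraph.upperDomNum]
  have hmem : n ∈ {m | ∃ D : Set (Fin 2 × Fin n),
      ((⊤ : SimpleGraph (Fin 2)) □ (⊤ : SimpleGraph (Fin n))).MinimalDominating D ∧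
        D.ncard = m} :=
    ⟨{p | p.1 = 0}, rook_row_minDom hn, rook_row_ncard⟩
  have hbd : ∀ m ∈ {m | ∃ D : Set (Fin 2 × Fin n),
      ((⊤ : SimpleGraph (Fin 2)) □ (⊤ : SimpleGraph (Fin n))).MinimalDominating D ∧
        D.ncard = m}, m ≤ n := by
    rintro m ⟨D, hD, rfl⟩
    exact rook_minDom_le hn D hD
  exact le_antisymm (csSup_le ⟨n, hmem⟩ hbd) (le_csSup ⟨n, hbd⟩ hmem)
end

section
/- Every minimal total dominating set of the 2 × n rook graph K_2 □ K_n (n ≥ 3) has size 2, 4, or n. -/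
set_option linter.unusedVariables false
set_option linter.unnecessarySeqFocus false

open SimpleGraph

variable {V : Type*} {W : Type*}

theorem stmt18 (n : ℕ) (hn : 3 ≤ n) (D : Set (Fin 2 × Fin n))
    (htd : ((⊤ : SimpleGraph (Fin 2)) □ (⊤ : SimpleGraph (Fin n))).TotalDominating D)
    (hmin : ∀ D' ⊆ D,
      ((⊤ : SimpleGraph (Fin 2)) □ (⊤ : SimpleGraph (Fin n))).TotalDominating D' → D' = D) :
    D.ncard = 2 ∨ D.ncard = 4 ∨ D.ncard = n := by
  classical
  set G := ((⊤ : SimpleGraph (Fin 2)) □ (⊤ : SimpleGraph (Fin n))) with hG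
  have fin2 : ∀ a : Fin 2, a = 0 ∨ a = 1 := by decide
  have hadj : ∀ (p q : Fin 2 × Fin n),
      G.Adj p q ↔ (p.1 ≠ q.1 ∧ p.2 = q.2) ∨ (p.2 ≠ q.2 ∧ p.1 = q.1) := by
    intro p q
    simp [hG, SimpleGraph.boxProd_adj, and_comm, or_comm]
  set R0 : Set (Fin n) := {b | ((0 : Fin 2), b) ∈ D} with hR0
  set R1 : Set (Fin n) := {b | ((1 : Fin 2), b) ∈ D} with hR1
  -- decomposition of D
  have hDeq : D = (fun b => ((0:Fin 2), b)) '' R0 ∪ (fun b => ((1:Fin 2), b)) '' R1 := by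
    ext ⟨a, b⟩
    rcases fin2 a with rfl | rfl <;>
      simp [hR0, hR1, Set.mem_image, Prod.ext_iff]
  have hcard : D.ncard = R0.ncard + R1.ncard := by
    rw [hDeq, Set.ncard_union_eq, Set.ncard_image_of_injective, Set.ncard_image_of_injective]
    · intro x y h; simpa using h
    · intro x y h; simpa using h
    · rw [Set.disjoint_left]
      rintro p ⟨x, hx, rfl⟩ ⟨y, hy, h⟩
      simp [Prod.ext_iff] at h
  -- domination characterization
  have hdom0 : ∀ b : Fin n, (∃ b' ∈ R0, b' ≠ b) ∨ b ∈ R1 := by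
    intro b
    obtain ⟨⟨a', b'⟩, hu, hadj'⟩ := htd (0, b)
    rw [hadj] at hadj'
    rcases fin2 a' with rfl | rfl
    · left
      refine ⟨b', hu, ?_⟩
      rcases hadj' with ⟨h, -⟩ | ⟨h, -⟩
      · exact absurd rfl h
      · exact h
    · right
      rcases hadj' with ⟨-, h⟩ | ⟨-, h⟩
      · exact (show b' = b from h) ▸ hu
      · simp at h
  have hdom1 : ∀ b : Fin n, (∃ b' ∈ R1, b' ≠ b) ∨ b ∈ R0 := by
    intro b
    obtain ⟨⟨a', b'⟩, hu, hadj'⟩ := htd (1, b)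
    rw [hadj] at hadj'
    rcases fin2 a' with rfl | rfl
    · right
      rcases hadj' with ⟨-, h⟩ | ⟨-, h⟩
      · exact (show b' = b from h) ▸ hu
      · simp at h
    · left
      refine ⟨b', hu, ?_⟩
      rcases hadj' with ⟨h, -⟩ | ⟨h, -⟩
      · exact absurd rfl h
      · exact h
  -- minimality: removing a vertex breaks total domination
  have hns : ∀ u ∈ D, ¬ G.TotalDominating (D \ {u}) := by
    intro u hu h
    have heq := hmin (D \ {u}) Set.diff_subset h
    rw [← heq] at hu
    simp at hu
  by_cases hcol : ∃ c, c ∈ R0 ∧ c ∈ R1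
  · -- a full column in D: D must equal that column, size 2
    obtain ⟨c, hc0, hc1⟩ := hcol
    left
    have hsub : ({((0:Fin 2), c), ((1:Fin 2), c)} : Set (Fin 2 × Fin n)) ⊆ D := by
      rintro p (rfl | rfl); exacts [hc0, hc1]
    have htds : G.TotalDominating {((0:Fin 2), c), ((1:Fin 2), c)} := by
      rintro ⟨a, b⟩
      rcases fin2 a with rfl | rfl <;> by_cases hb : b = c
      · exact ⟨(1, c), by simp, by rw [hadj]; left; exact ⟨by simp, hb ▸ rfl⟩⟩
      · exact ⟨(0, c), by simp, by rw [hadj]; right; exact ⟨Ne.symm hb, rfl⟩⟩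
      · exact ⟨(0, c), by simp, by rw [hadj]; left; exact ⟨by simp, hb ▸ rfl⟩⟩
      · exact ⟨(1, c), by simp, by rw [hadj]; right; exact ⟨Ne.symm hb, rfl⟩⟩
    have := hmin _ hsub htds
    rw [← this, Set.ncard_pair (by simp)]
  · push_neg at hcol
    by_cases h0 : R0 = ∅
    · -- row 1 is everything
      right; right
      have hR1univ : R1 = Set.univ := by
        ext b
        rcases hdom0 b with ⟨b', hb', -⟩ | h
        · exact absurd hb' (by simp [h0])
        · simp [h]
      rw [hcard, hR1univ, h0, Set.ncard_univ, Set.ncard_empty]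
      simp
    · by_cases h1 : R1 = ∅
      · right; right
        have hR0univ : R0 = Set.univ := by
          ext b
          rcases hdom1 b with ⟨b', hb', -⟩ | h
          · exact absurd hb' (by simp [h1])
          · simp [h]
        rw [hcard, hR0univ, h1, Set.ncard_univ, Set.ncard_empty]
        simp
      · -- both rows nonempty, no common column: show r0 = r1 = 2
        right; left
        obtain ⟨c0, hc0⟩ := Set.nonempty_iff_ne_empty.2 h0
        obtain ⟨c1, hc1⟩ := Set.nonempty_iff_ne_empty.2 h1
        obtain ⟨c0', hc0', hc0ne⟩ : ∃ b' ∈ R0, b' ≠ c0 := by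
          rcases hdom0 c0 with h | h
          · exact h
          · exact absurd h (hcol c0 hc0)
        obtain ⟨c1', hc1', hc1ne⟩ : ∃ b' ∈ R1, b' ≠ c1 := by
          rcases hdom1 c1 with h | h
          · exact h
          · exact absurd h (fun hx => hcol c1 h hc1)
        have hr0ge : 2 ≤ R0.ncard := by
          have : ({c0', c0} : Set (Fin n)) ⊆ R0 := by rintro x (rfl | rfl); exacts [hc0', hc0]
          calc 2 = ({c0', c0} : Set (Fin n)).ncard := (Set.ncard_pair hc0ne).symm
            _ ≤ R0.ncard := Set.ncard_le_ncard this (Set.toFinite _)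
        have hr1ge : 2 ≤ R1.ncard := by
          have : ({c1', c1} : Set (Fin n)) ⊆ R1 := by rintro x (rfl | rfl); exacts [hc1', hc1]
          calc 2 = ({c1', c1} : Set (Fin n)).ncard := (Set.ncard_pair hc1ne).symm
            _ ≤ R1.ncard := Set.ncard_le_ncard this (Set.toFinite _)
        -- helper: picking elements avoiding one or two values
        have pick1 : ∀ (S : Set (Fin n)), 2 ≤ S.ncard → ∀ x, ∃ z ∈ S, z ≠ x := by
          intro S hS x
          by_contra h
          push_neg at h
          have hsub : S ⊆ {x} := fun z hz => h z hz
          have := Set.ncard_le_ncard hsub (Set.toFinite _)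
          rw [Set.ncard_singleton] at this
          omega
        have pick2 : ∀ (S : Set (Fin n)), 3 ≤ S.ncard → ∀ x y, ∃ z ∈ S, z ≠ x ∧ z ≠ y := by
          intro S hS x y
          by_contra h
          push_neg at h
          have hsub : S ⊆ {x, y} := by
            intro z hz
            rcases em (z = x) with rfl | hzx
            · exact Set.mem_insert _ _
            · simp [h z hz hzx]
          have h2 : S.ncard ≤ ({x, y} : Set (Fin n)).ncard :=
            Set.ncard_le_ncard hsub (Set.toFinite _)
          have h3 : ({x, y} : Set (Fin n)).ncard ≤ 2 :=
            (Set.ncard_insert_le x {y}).trans (by simp)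
          omega
        have hr0le : R0.ncard ≤ 2 := by
          by_contra hgt
          push_neg at hgt
          apply hns (0, c0) hc0
          rintro ⟨a, b⟩
          rcases fin2 a with rfl | rfl
          · obtain ⟨z, hz, hzx, hzy⟩ := pick2 R0 hgt c0 b
            exact ⟨(0, z), ⟨hz, by simp [Prod.ext_iff, hzx]⟩,
              by rw [hadj]; right; exact ⟨hzy, rfl⟩⟩
          · obtain ⟨z, hz, hzb⟩ := pick1 R1 hr1ge b
            exact ⟨(1, z), ⟨hz, by simp [Prod.ext_iff]⟩,
              by rw [hadj]; right; exact ⟨hzb, rfl⟩⟩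
        have hr1le : R1.ncard ≤ 2 := by
          by_contra hgt
          push_neg at hgt
          apply hns (1, c1) hc1
          rintro ⟨a, b⟩
          rcases fin2 a with rfl | rfl
          · obtain ⟨z, hz, hzb⟩ := pick1 R0 hr0ge b
            exact ⟨(0, z), ⟨hz, by simp [Prod.ext_iff]⟩,
              by rw [hadj]; right; exact ⟨hzb, rfl⟩⟩
          · obtain ⟨z, hz, hzx, hzy⟩ := pick2 R1 hgt c1 b
            exact ⟨(1, z), ⟨hz, by simp [Prod.ext_iff, hzx]⟩,
              by rw [hadj]; right; exact ⟨hzy, rfl⟩⟩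
        omega
end
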